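/- For every z ∈ K and i, j ∈ {1,2} with i ≠ j, the quantity 𝔼_z[|f_i·S(τ)| e^{a(c_i)·S(τ)}; τ = τ_j < τ_i] is finite. -/

import Mathlib

open scoped ENNReal Classical

noncomputable section

namespace KilledRW

/-- The two-dimensional integer lattice. -/
abbrev Z2 := ℤ × ℤ

/-- The plane `ℝ²`. -/
abbrev R2 := ℝ × ℝ

/-- Euclidean dot product on `ℝ²`. -/
def dotR (a b : R2) : ℝ := a.1 * b.1 + a.2 * b.2

/-- Embedding of the lattice into the plane. -/
def emb (z : Z2) : R2 := ((z.1 : ℝ), (z.2 : ℝ))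

/-- Euclidean norm on `ℝ²`. -/
def nrm (x : R2) : ℝ := Real.sqrt (dotR x x)

/-- The jump generating function `φ(a) = Σ_z γ(z) e^{a·z}`. -/
def jgf (γ : Z2 → ℝ) (a : R2) : ℝ := ∑' z : Z2, γ z * Real.exp (dotR a (emb z))

/-- The gradient `∇φ(a) = Σ_z z γ(z) e^{a·z}` of the jump generating function. -/
def gradJgf (γ : Z2 → ℝ) (a : R2) : R2 :=
  (∑' z : Z2, γ z * Real.exp (dotR a (emb z)) * (z.1 : ℝ),
   ∑' z : Z2, γ z * Real.exp (dotR a (emb z)) * (z.2 : ℝ))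

/-- The normalized gradient `q(a) = ∇φ(a)/|∇φ(a)|`. -/
def qmap (γ : Z2 → ℝ) (a : R2) : R2 := (nrm (gradJgf γ a))⁻¹ • gradJgf γ a

/-- (Sub)stochastic transition kernel of the twisted random walk `S_a`:
`p_a(z,z') = γ(z'-z) e^{a·(z'-z)}`.  For `a = 0` this is the kernel of the original walk. -/
def twKer (γ : Z2 → ℝ) (a : R2) (z z' : Z2) : ℝ≥0∞ :=
  ENNReal.ofReal (γ (z' - z) * Real.exp (dotR a (emb (z' - z))))

/-- `n`-step transition probabilities of the (sub)stochastic kernel `κ`. -/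
def nstep (κ : Z2 → Z2 → ℝ≥0∞) : ℕ → Z2 → Z2 → ℝ≥0∞
  | 0, z, z' => if z' = z then 1 else 0
  | n + 1, z, z' => ∑' w : Z2, κ z w * nstep κ n w z'

/-- `exitP κ A n z z' = ℙ_z(τ_A = n, S(n) = z')`: the probability that the walk with kernel `κ`
started at `z` stays in `A` strictly before time `n` and is at `z' ∉ A` at time `n`
(where `τ_A = inf{n ≥ 0 : S(n) ∉ A}`). -/
def exitP (κ : Z2 → Z2 → ℝ≥0∞) (A : Set Z2) : ℕ → Z2 → Z2 → ℝ≥0∞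
  | 0, z, z' => if z' = z ∧ z ∉ A then 1 else 0
  | n + 1, z, z' => if z ∈ A then ∑' w : Z2, κ z w * exitP κ A n w z' else 0

/-- `aliveP κ A n z z' = ℙ_z(τ_A > n, S(n) = z')`. -/
def aliveP (κ : Z2 → Z2 → ℝ≥0∞) (A : Set Z2) : ℕ → Z2 → Z2 → ℝ≥0∞
  | 0, z, z' => if z' = z ∧ z ∈ A then 1 else 0
  | n + 1, z, z' => if z ∈ A then ∑' w : Z2, κ z w * aliveP κ A n w z' else 0

/-- `ℙ_z(τ_A < ∞)` for the walk with kernel `κ`. -/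
def exitTotal (κ : Z2 → Z2 → ℝ≥0∞) (A : Set Z2) (z : Z2) : ℝ≥0∞ :=
  ∑' n : ℕ, ∑' z' : Z2, exitP κ A n z z'

/-- `𝔼_z[g(S(τ_A)); τ_A < ∞]` for a nonnegative integrand, with values in `ℝ≥0∞`. -/
def exitLExp (κ : Z2 → Z2 → ℝ≥0∞) (A : Set Z2) (z : Z2) (g : Z2 → ℝ) : ℝ≥0∞ :=
  ∑' n : ℕ, ∑' z' : Z2, exitP κ A n z z' * ENNReal.ofReal (g z')

/-- `𝔼_z[g(S(τ_A)); τ_A < ∞]` for a signed integrand (positive part minus negative part). -/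
def exitExp (κ : Z2 → Z2 → ℝ≥0∞) (A : Set Z2) (z : Z2) (g : Z2 → ℝ) : ℝ :=
  (exitLExp κ A z g).toReal - (exitLExp κ A z fun w => -g w).toReal

/-- `𝔼_z[g(S(τ_A)); τ_A ≤ n]`, nonnegative version. -/
def exitLExpTrunc (κ : Z2 → Z2 → ℝ≥0∞) (A : Set Z2) (z : Z2) (g : Z2 → ℝ) (n : ℕ) : ℝ≥0∞ :=
  ∑ m ∈ Finset.range (n + 1), ∑' z' : Z2, exitP κ A m z z' * ENNReal.ofReal (g z')

/-- `𝔼_z[g(S(τ_A)); τ_A ≤ n]`, signed version. -/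
def exitExpTrunc (κ : Z2 → Z2 → ℝ≥0∞) (A : Set Z2) (z : Z2) (g : Z2 → ℝ) (n : ℕ) : ℝ :=
  (exitLExpTrunc κ A z g n).toReal - (exitLExpTrunc κ A z (fun w => -g w) n).toReal

/-- `𝔼_z[g(S(n)); τ_A > n]`, nonnegative version. -/
def aliveLExpAt (κ : Z2 → Z2 → ℝ≥0∞) (A : Set Z2) (z : Z2) (g : Z2 → ℝ) (n : ℕ) : ℝ≥0∞ :=
  ∑' z' : Z2, aliveP κ A n z z' * ENNReal.ofReal (g z')

/-- `𝔼_z[g(S(n)); τ_A > n]`, signed version. -/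
def aliveExpAt (κ : Z2 → Z2 → ℝ≥0∞) (A : Set Z2) (z : Z2) (g : Z2 → ℝ) (n : ℕ) : ℝ :=
  (aliveLExpAt κ A z g n).toReal - (aliveLExpAt κ A z (fun w => -g w) n).toReal

section Aux

lemma dotR_add_left (a b x : R2) : dotR (a + b) x = dotR a x + dotR b x := by
  simp [dotR]; ring

lemma dotR_sub_left (a b x : R2) : dotR (a - b) x = dotR a x - dotR b x := by
  simp [dotR]; ring

lemma dotR_smul_left (t : ℝ) (a x : R2) : dotR (t • a) x = t * dotR a x := by
  simp [dotR, Prod.smul_fst, Prod.smul_snd, smul_eq_mul]; ring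

lemma dotR_zero_left (x : R2) : dotR 0 x = 0 := by simp [dotR]

lemma dotR_sub_right (a : R2) (x y : R2) : dotR a (x - y) = dotR a x - dotR a y := by
  simp [dotR]; ring

lemma dotR_smul_right (t : ℝ) (a x : R2) : dotR a (t • x) = t * dotR a x := by
  simp [dotR, Prod.smul_fst, Prod.smul_snd, smul_eq_mul]; ring

lemma emb_sub (w z : Z2) : emb (w - z) = emb w - emb z := by
  simp [emb, Prod.ext_iff]

lemma nrm_eq_zero {x : R2} (h : nrm x = 0) : x = 0 := by
  have h2 : dotR x x ≤ 0 := by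
    by_contra hc
    push_neg at hc
    have := Real.sqrt_pos.mpr hc
    rw [nrm] at h; linarith
  have h1 : x.1 * x.1 + x.2 * x.2 ≤ 0 := by simpa [dotR] using h2
  have hx1 : x.1 = 0 := by nlinarith [mul_self_nonneg x.1, mul_self_nonneg x.2]
  have hx2 : x.2 = 0 := by nlinarith [mul_self_nonneg x.1, mul_self_nonneg x.2]
  exact Prod.ext hx1 hx2

lemma le_exp_self (x : ℝ) : x ≤ Real.exp x := by
  have := Real.add_one_le_exp x; linarith

lemma abs_exp_sub_one_le' (y : ℝ) : |Real.exp y - 1| ≤ |y| * Real.exp |y| := by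
  rcases le_or_gt 0 y with hy | hy
  · have hmul : Real.exp y * Real.exp (-y) = 1 := by rw [← Real.exp_add]; simp
    have h1 : Real.exp y - 1 ≤ y * Real.exp y := by
      have h := mul_le_mul_of_nonneg_left (Real.add_one_le_exp (-y)) (Real.exp_pos y).le
      nlinarith
    have h0 : 0 ≤ Real.exp y - 1 := by nlinarith [Real.one_le_exp hy]
    rw [abs_of_nonneg h0, abs_of_nonneg hy]
    exact h1
  · have h0 : Real.exp y < 1 := by
      have := Real.exp_lt_exp.mpr hy; simpa using this
    have h1 : 1 - Real.exp y ≤ -y := by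
      have := Real.add_one_le_exp y; linarith
    have h2 : (1:ℝ) ≤ Real.exp (-y) := Real.one_le_exp (by linarith)
    rw [abs_of_nonpos (by linarith), abs_of_neg hy]
    nlinarith

lemma quot_bound {s t : ℝ} (ht0 : 0 < t) (ht1 : t ≤ 1) :
    |(Real.exp (t * s) - 1) / t| ≤ Real.exp (2 * s) + Real.exp (-(2 * s)) := by
  have h1 : |Real.exp (t * s) - 1| ≤ |t * s| * Real.exp |t * s| := abs_exp_sub_one_le' _
  have h2 : |t * s| = t * |s| := by rw [abs_mul, abs_of_pos ht0]
  have h3 : t * |s| ≤ |s| := by nlinarith [abs_nonneg s]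
  have h4 : Real.exp |t * s| ≤ Real.exp |s| := Real.exp_le_exp.mpr (by rw [h2]; exact h3)
  have h6 : |Real.exp (t * s) - 1| / t ≤ |s| * Real.exp |s| := by
    rw [div_le_iff₀ ht0]
    calc |Real.exp (t * s) - 1| ≤ |t * s| * Real.exp |t * s| := h1
      _ = t * |s| * Real.exp |t * s| := by rw [h2]
      _ ≤ t * |s| * Real.exp |s| := by
          apply mul_le_mul_of_nonneg_left h4 (by positivity)
      _ ≤ |s| * Real.exp |s| * t := by
          have := mul_le_mul_of_nonneg_right h3 (Real.exp_nonneg |s|)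
          nlinarith [Real.exp_nonneg |s|]
  have h7 : |s| * Real.exp |s| ≤ Real.exp (2 * |s|) := by
    have hx : |s| ≤ Real.exp |s| := le_exp_self _
    calc |s| * Real.exp |s| ≤ Real.exp |s| * Real.exp |s| :=
          mul_le_mul_of_nonneg_right hx (Real.exp_nonneg _)
      _ = Real.exp (|s| + |s|) := (Real.exp_add _ _).symm
      _ = Real.exp (2 * |s|) := by ring_nf
  have h8 : Real.exp (2 * |s|) ≤ Real.exp (2 * s) + Real.exp (-(2 * s)) := by
    rcases abs_cases s with ⟨h, _⟩ | ⟨h, _⟩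
    · rw [h]; nlinarith [Real.exp_pos (-(2 * s))]
    · rw [h, show 2 * -s = -(2 * s) by ring]; nlinarith [Real.exp_pos (2 * s)]
  have h5 : |(Real.exp (t * s) - 1) / t| = |Real.exp (t * s) - 1| / t := by
    rw [abs_div, abs_of_pos ht0]
  rw [h5]; linarith

lemma summable_mul_dot (γ : Z2 → ℝ) (hγ0 : ∀ z : Z2, 0 ≤ γ z)
    (hA3 : ∀ a : R2, Summable fun z : Z2 => γ z * Real.exp (dotR a (emb z)))
    (a u : R2) :
    Summable (fun w : Z2 => γ w * Real.exp (dotR a (emb w)) * dotR u (emb w)) := by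
  apply Summable.of_abs
  refine Summable.of_nonneg_of_le (fun w => abs_nonneg _) (fun w => ?_)
    ((hA3 (a + u)).add (hA3 (a - u)))
  set s := dotR u (emb w) with hs
  have habs : |s| ≤ Real.exp s + Real.exp (-s) := by
    rcases abs_cases s with ⟨h, _⟩ | ⟨h, _⟩
    · rw [h]; nlinarith [le_exp_self s, Real.exp_pos (-s)]
    · rw [h]; nlinarith [le_exp_self (-s), Real.exp_pos s]
  have he : 0 ≤ γ w * Real.exp (dotR a (emb w)) :=
    mul_nonneg (hγ0 w) (Real.exp_nonneg _)
  rw [abs_mul, abs_of_nonneg he]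
  calc γ w * Real.exp (dotR a (emb w)) * |s|
      ≤ γ w * Real.exp (dotR a (emb w)) * (Real.exp s + Real.exp (-s)) :=
        mul_le_mul_of_nonneg_left habs he
    _ = γ w * Real.exp (dotR (a + u) (emb w)) + γ w * Real.exp (dotR (a - u) (emb w)) := by
        rw [dotR_add_left, dotR_sub_left, Real.exp_add, sub_eq_add_neg, Real.exp_add]
        ring

lemma tsum_dot_eq (γ : Z2 → ℝ) (hγ0 : ∀ z : Z2, 0 ≤ γ z)
    (hA3 : ∀ a : R2, Summable fun z : Z2 => γ z * Real.exp (dotR a (emb z)))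
    (a v : R2) :
    ∑' w : Z2, γ w * Real.exp (dotR a (emb w)) * dotR v (emb w)
      = dotR v (gradJgf γ a) := by
  have h1 : (fun w : Z2 => γ w * Real.exp (dotR a (emb w)) * (w.1 : ℝ))
      = fun w : Z2 => γ w * Real.exp (dotR a (emb w)) * dotR ((1 : ℝ), (0 : ℝ)) (emb w) := by
    funext w; simp [dotR, emb]
  have h2 : (fun w : Z2 => γ w * Real.exp (dotR a (emb w)) * (w.2 : ℝ))
      = fun w : Z2 => γ w * Real.exp (dotR a (emb w)) * dotR ((0 : ℝ), (1 : ℝ)) (emb w) := by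
    funext w; simp [dotR, emb]
  have s1 : Summable (fun w : Z2 => γ w * Real.exp (dotR a (emb w)) * (w.1 : ℝ)) := by
    rw [h1]; exact summable_mul_dot γ hγ0 hA3 a _
  have s2 : Summable (fun w : Z2 => γ w * Real.exp (dotR a (emb w)) * (w.2 : ℝ)) := by
    rw [h2]; exact summable_mul_dot γ hγ0 hA3 a _
  have key : dotR v (gradJgf γ a)
      = ∑' w : Z2, (v.1 * (γ w * Real.exp (dotR a (emb w)) * (w.1 : ℝ))
          + v.2 * (γ w * Real.exp (dotR a (emb w)) * (w.2 : ℝ))) := by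
    rw [Summable.tsum_add (s1.mul_left v.1) (s2.mul_left v.2)]
    rw [tsum_mul_left, tsum_mul_left]
    simp [dotR, gradJgf]
  rw [key]
  apply tsum_congr
  intro w
  simp [dotR, emb]; ring

end Aux

section Aux2

lemma exists_param (γ : Z2 → ℝ) (hγ0 : ∀ z : Z2, 0 ≤ γ z)
    (hA3 : ∀ a : R2, Summable fun z : Z2 => γ z * Real.exp (dotR a (emb z)))
    (a v : R2) (haD : jgf γ a = 1)
    (hD : ∑' w : Z2, γ w * Real.exp (dotR a (emb w)) * dotR v (emb w) < 0) :
    ∃ t : ℝ, 0 < t ∧ jgf γ (a + t • v) < 1 := by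
  set tk : ℕ → ℝ := fun k => 1 / ((k : ℝ) + 1) with htk
  have htk_pos : ∀ k, 0 < tk k := fun k => by positivity
  have htk_le : ∀ k, tk k ≤ 1 := fun k => by
    rw [htk]; rw [div_le_one (by positivity)]; simp
  set F : ℕ → Z2 → ℝ := fun k w =>
    γ w * Real.exp (dotR a (emb w)) * ((Real.exp (tk k * dotR v (emb w)) - 1) / tk k) with hF
  set g : Z2 → ℝ := fun w => γ w * Real.exp (dotR a (emb w)) * dotR v (emb w) with hg
  have h_sum : Summable (fun w : Z2 =>
      γ w * Real.exp (dotR (a + (2:ℝ) • v) (emb w))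
        + γ w * Real.exp (dotR (a - (2:ℝ) • v) (emb w))) :=
    (hA3 _).add (hA3 _)
  have hab : ∀ w : Z2, Filter.Tendsto (fun k => F k w) Filter.atTop (nhds (g w)) := by
    intro w
    set s := dotR v (emb w) with hs
    have hd : HasDerivAt (fun t : ℝ => Real.exp (t * s)) s 0 := by
      simpa using (hasDerivAt_mul_const (x := (0:ℝ)) s).exp
    have hslope := hasDerivAt_iff_tendsto_slope.mp hd
    have htend : Filter.Tendsto tk Filter.atTop (nhdsWithin 0 {(0:ℝ)}ᶜ) := by
      apply tendsto_nhdsWithin_of_tendsto_nhds_of_eventually_within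
      · exact tendsto_one_div_add_atTop_nhds_zero_nat
      · exact Filter.Eventually.of_forall fun k => (htk_pos k).ne'
    have hcomp := hslope.comp htend
    have heq : ∀ k, slope (fun t : ℝ => Real.exp (t * s)) 0 (tk k)
        = (Real.exp (tk k * s) - 1) / tk k := by
      intro k
      simp [slope, div_eq_inv_mul]
    have : Filter.Tendsto (fun k => (Real.exp (tk k * s) - 1) / tk k)
        Filter.atTop (nhds s) := by
      refine hcomp.congr fun k => ?_
      exact heq k
    simpa [hF, hg] using this.const_mul (γ w * Real.exp (dotR a (emb w)))
  have h_bound : ∀ᶠ k in Filter.atTop, ∀ w : Z2, ‖F k w‖ ≤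
      γ w * Real.exp (dotR (a + (2:ℝ) • v) (emb w))
        + γ w * Real.exp (dotR (a - (2:ℝ) • v) (emb w)) := by
    refine Filter.Eventually.of_forall fun k w => ?_
    set s := dotR v (emb w) with hs
    have he : 0 ≤ γ w * Real.exp (dotR a (emb w)) :=
      mul_nonneg (hγ0 w) (Real.exp_nonneg _)
    have hq := quot_bound (s := s) (htk_pos k) (htk_le k)
    calc ‖F k w‖ = γ w * Real.exp (dotR a (emb w)) * |(Real.exp (tk k * s) - 1) / tk k| := by
          rw [hF]; rw [Real.norm_eq_abs, abs_mul, abs_of_nonneg he]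
      _ ≤ γ w * Real.exp (dotR a (emb w)) * (Real.exp (2 * s) + Real.exp (-(2 * s))) :=
          mul_le_mul_of_nonneg_left hq he
      _ = γ w * Real.exp (dotR (a + (2:ℝ) • v) (emb w))
            + γ w * Real.exp (dotR (a - (2:ℝ) • v) (emb w)) := by
          rw [dotR_add_left, dotR_sub_left, dotR_smul_left, Real.exp_add,
            sub_eq_add_neg, Real.exp_add]
          ring_nf
          rw [hs]
  have hT := tendsto_tsum_of_dominated_convergence h_sum hab h_bound
  have hev : ∀ᶠ k in Filter.atTop, (∑' w : Z2, F k w) < 0 :=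
    hT.eventually_lt_const hD
  obtain ⟨k, hk⟩ := hev.exists
  refine ⟨tk k, htk_pos k, ?_⟩
  have hsum_eq : (∑' w : Z2, F k w) = (jgf γ (a + tk k • v) - 1) / tk k := by
    have hpt : ∀ w : Z2, F k w
        = (γ w * Real.exp (dotR (a + tk k • v) (emb w))
            - γ w * Real.exp (dotR a (emb w))) / tk k := by
      intro w
      rw [hF]
      rw [dotR_add_left, dotR_smul_left, Real.exp_add]
      field_simp
    rw [tsum_congr hpt, tsum_div_const, Summable.tsum_sub (hA3 _) (hA3 a)]
    have h1 : (∑' w : Z2, γ w * Real.exp (dotR a (emb w))) = 1 := haD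
    rw [h1]
    rfl
  rw [hsum_eq] at hk
  have := htk_pos k
  rcases div_neg_iff.mp hk with ⟨h1, _⟩ | ⟨_, h2⟩
  · linarith
  · linarith

end Aux2

section Aux3

lemma jgf_nonneg (γ : Z2 → ℝ) (hγ0 : ∀ z : Z2, 0 ≤ γ z) (b : R2) : 0 ≤ jgf γ b :=
  tsum_nonneg fun w => mul_nonneg (hγ0 w) (Real.exp_nonneg _)

lemma ker_exp_sum (γ : Z2 → ℝ) (hγ0 : ∀ z : Z2, 0 ≤ γ z)
    (hA3 : ∀ a : R2, Summable fun z : Z2 => γ z * Real.exp (dotR a (emb z)))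
    (b : R2) (z : Z2) :
    ∑' w : Z2, twKer γ 0 z w * ENNReal.ofReal (Real.exp (dotR b (emb w)))
      = ENNReal.ofReal (Real.exp (dotR b (emb z)) * jgf γ b) := by
  have hterm : ∀ w : Z2, twKer γ 0 z w * ENNReal.ofReal (Real.exp (dotR b (emb w)))
      = ENNReal.ofReal (Real.exp (dotR b (emb z)))
          * ENNReal.ofReal (γ (w - z) * Real.exp (dotR b (emb (w - z)))) := by
    intro w
    have h0 : dotR 0 (emb (w - z)) = 0 := dotR_zero_left _
    have hsplit : dotR b (emb w) = dotR b (emb z) + dotR b (emb (w - z)) := by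
      rw [emb_sub, dotR_sub_right]; ring
    rw [twKer, h0, Real.exp_zero, mul_one]
    rw [← ENNReal.ofReal_mul (hγ0 _), ← ENNReal.ofReal_mul (Real.exp_nonneg _)]
    congr 1
    rw [hsplit, Real.exp_add]; ring
  rw [tsum_congr hterm, ENNReal.tsum_mul_left]
  have hre : (∑' w : Z2, ENNReal.ofReal (γ (w - z) * Real.exp (dotR b (emb (w - z)))))
      = ∑' u : Z2, ENNReal.ofReal (γ u * Real.exp (dotR b (emb u))) :=
    Equiv.tsum_eq (Equiv.subRight z) (fun u => ENNReal.ofReal (γ u * Real.exp (dotR b (emb u))))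
  rw [hre, ← ENNReal.ofReal_tsum_of_nonneg
    (fun u => mul_nonneg (hγ0 u) (Real.exp_nonneg _)) (hA3 b)]
  rw [← ENNReal.ofReal_mul (Real.exp_nonneg _)]
  rfl

lemma exit_exp_bound (γ : Z2 → ℝ) (hγ0 : ∀ z : Z2, 0 ≤ γ z)
    (hA3 : ∀ a : R2, Summable fun z : Z2 => γ z * Real.exp (dotR a (emb z)))
    (b : R2) (A : Set Z2) :
    ∀ (n : ℕ) (z : Z2),
      (∑' z' : Z2, exitP (twKer γ 0) A n z z' * ENNReal.ofReal (Real.exp (dotR b (emb z'))))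
        ≤ ENNReal.ofReal (jgf γ b) ^ n * ENNReal.ofReal (Real.exp (dotR b (emb z))) := by
  intro n
  induction n with
  | zero =>
    intro z
    have hpt : ∀ z' : Z2,
        exitP (twKer γ 0) A 0 z z' * ENNReal.ofReal (Real.exp (dotR b (emb z')))
          ≤ if z' = z then ENNReal.ofReal (Real.exp (dotR b (emb z))) else 0 := by
      intro z'
      by_cases hzz : z' = z ∧ z ∉ A
      · simp [exitP, hzz, hzz.1]
      · simp only [exitP, if_neg hzz, zero_mul]
        exact zero_le
    calc (∑' z' : Z2, exitP (twKer γ 0) A 0 z z' * ENNReal.ofReal (Real.exp (dotR b (emb z'))))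
        ≤ ∑' z' : Z2, if z' = z then ENNReal.ofReal (Real.exp (dotR b (emb z))) else 0 :=
          ENNReal.tsum_le_tsum hpt
      _ = ENNReal.ofReal (Real.exp (dotR b (emb z))) := tsum_ite_eq z _
      _ = ENNReal.ofReal (jgf γ b) ^ 0 * ENNReal.ofReal (Real.exp (dotR b (emb z))) := by
          rw [pow_zero, one_mul]
  | succ n ih =>
    intro z
    by_cases hzA : z ∈ A
    · have hrw : ∀ z' : Z2, exitP (twKer γ 0) A (n + 1) z z'
          = ∑' w : Z2, twKer γ 0 z w * exitP (twKer γ 0) A n w z' := by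
        intro z'; simp [exitP, hzA]
      calc (∑' z' : Z2, exitP (twKer γ 0) A (n + 1) z z'
              * ENNReal.ofReal (Real.exp (dotR b (emb z'))))
          = ∑' z' : Z2, ∑' w : Z2, twKer γ 0 z w * exitP (twKer γ 0) A n w z'
              * ENNReal.ofReal (Real.exp (dotR b (emb z'))) := by
            refine tsum_congr fun z' => ?_
            rw [hrw z', ENNReal.tsum_mul_right]
        _ = ∑' w : Z2, ∑' z' : Z2, twKer γ 0 z w * exitP (twKer γ 0) A n w z'
              * ENNReal.ofReal (Real.exp (dotR b (emb z'))) := ENNReal.tsum_comm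
        _ = ∑' w : Z2, twKer γ 0 z w * ∑' z' : Z2, exitP (twKer γ 0) A n w z'
              * ENNReal.ofReal (Real.exp (dotR b (emb z'))) := by
            refine tsum_congr fun w => ?_
            rw [← ENNReal.tsum_mul_left]
            exact tsum_congr fun z' => by ring
        _ ≤ ∑' w : Z2, twKer γ 0 z w
              * (ENNReal.ofReal (jgf γ b) ^ n * ENNReal.ofReal (Real.exp (dotR b (emb w)))) :=
            ENNReal.tsum_le_tsum fun w => mul_le_mul_right (ih w) _
        _ = ENNReal.ofReal (jgf γ b) ^ n
              * ∑' w : Z2, twKer γ 0 z w * ENNReal.ofReal (Real.exp (dotR b (emb w))) := by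
            rw [← ENNReal.tsum_mul_left]
            exact tsum_congr fun w => by ring
        _ = ENNReal.ofReal (jgf γ b) ^ n
              * ENNReal.ofReal (Real.exp (dotR b (emb z)) * jgf γ b) := by
            rw [ker_exp_sum γ hγ0 hA3 b z]
        _ ≤ ENNReal.ofReal (jgf γ b) ^ (n + 1)
              * ENNReal.ofReal (Real.exp (dotR b (emb z))) := by
            rw [ENNReal.ofReal_mul (Real.exp_nonneg _)]
            rw [pow_succ]
            apply le_of_eq
            ring
    · have hrw : ∀ z' : Z2, exitP (twKer γ 0) A (n + 1) z z' = 0 := by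
        intro z'; simp [exitP, hzA]
      simp only [hrw, zero_mul, tsum_zero]
      exact zero_le

end Aux3

/-- **Corollary 1.** For every `z ∈ K` and `i ≠ j` in `{1,2}`, the quantity
`𝔼_z[|fᵢ·S(τ)| e^{a(cᵢ)·S(τ)}; τ = τⱼ < τᵢ]` is finite.  Here `a(cᵢ)` is the unique
point `a ∈ ∂D` with `q(a) = cᵢ`, and the event `{τ = τⱼ < τᵢ}` means `S(τ) ∈ Hᵢ \ Hⱼ`. -/
theorem exit_exp_abs_side_finite
    (γ : Z2 → ℝ) (c f : Fin 2 → R2) (K : Set R2)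
    -- `γ` is a probability distribution on `ℤ²`
    (hγ0 : ∀ z : Z2, 0 ≤ γ z) (hγ1 : HasSum γ 1)
    -- `c 0, c 1` are unit vectors, `f i` is the unit vector perpendicular to `c i`
    -- pointing into the cone; the angle between `c 0` and `c 1` lies in `(0, π)`
    (hcUnit : ∀ i, nrm (c i) = 1) (hfUnit : ∀ i, nrm (f i) = 1)
    (hperp : ∀ i, dotR (f i) (c i) = 0)
    (hinward : ∀ i j, i ≠ j → 0 < dotR (f i) (c j))
    -- `K` is the open convex cone bounded by the rays through `c 0` and `c 1`
    (hK : K = {x : R2 | ∀ i, 0 < dotR (f i) x})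
    -- (A1) the walk is irreducible with nonzero mean
    (hA1 : ∀ z z' : Z2, ∃ n : ℕ, 0 < nstep (twKer γ 0) n z z')
    (hmean : (∑' z : Z2, γ z * (z.1 : ℝ), ∑' z : Z2, γ z * (z.2 : ℝ)) ≠ (0, 0))
    -- (A2) the walk killed when leaving `K` is irreducible in `K`
    (hA2 : ∀ z z' : Z2, emb z ∈ K → emb z' ∈ K →
        ∃ n : ℕ, 0 < aliveP (twKer γ 0) (emb ⁻¹' K) n z z')
    -- (A3) the jump generating function is finite everywhere
    (hA3 : ∀ a : R2, Summable fun z : Z2 => γ z * Real.exp (dotR a (emb z)))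
    -- (A4) the projections `fᵢ·S(n)` are aperiodic random walks
    (hA4 : ∀ i : Fin 2, ∀ d : ℕ,
        (∀ n : ℕ, 0 < n →
          0 < ∑' z : Z2, (if dotR (f i) (emb z) = 0 then nstep (twKer γ 0) n 0 z else 0) →
          d ∣ n) → d = 1)
    (z : Z2) (hz : emb z ∈ K) (i j : Fin 2) (hij : i ≠ j)
    -- `a = a(cᵢ)`
    (a : R2) (haD : jgf γ a = 1) (haq : qmap γ a = c i) :
    exitLExp (twKer γ 0) (emb ⁻¹' K) z
        (fun z' => if 0 < dotR (f i) (emb z') ∧ dotR (f j) (emb z') ≤ 0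
          then |dotR (f i) (emb z')| * Real.exp (dotR a (emb z')) else 0)
      ≠ ⊤ := by
  classical
  -- Step 1: find `t > 0` with `jgf γ (a + t • (f i - f j)) < 1`.
  set G : R2 := gradJgf γ a with hG
  have hgne : G ≠ 0 := by
    intro h
    have hq0 : qmap γ a = 0 := by rw [qmap, ← hG, h]; simp
    have hci : c i = 0 := by rw [← haq, hq0]
    have h1 := hcUnit i
    rw [hci] at h1
    simp [nrm, dotR] at h1
  have hnrm_ne : nrm G ≠ 0 := fun h => hgne (nrm_eq_zero h)
  have hnrm_pos : 0 < nrm G :=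
    lt_of_le_of_ne (Real.sqrt_nonneg _) (Ne.symm hnrm_ne)
  have hgrad : G = nrm G • c i := by
    have h1 : (nrm G)⁻¹ • G = c i := haq
    have h2 := congrArg (fun x : R2 => nrm G • x) h1
    simpa [smul_smul, mul_inv_cancel₀ hnrm_ne] using h2
  have hvc : dotR (f i - f j) (c i) < 0 := by
    rw [dotR_sub_left, hperp i]
    have := hinward j i (Ne.symm hij)
    linarith
  have hDdot : dotR (f i - f j) G < 0 := by
    rw [hgrad, dotR_smul_right]
    exact mul_neg_of_pos_of_neg hnrm_pos hvc
  have hD : ∑' w : Z2, γ w * Real.exp (dotR a (emb w)) * dotR (f i - f j) (emb w) < 0 := by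
    rw [tsum_dot_eq γ hγ0 hA3 a (f i - f j)]
    exact hDdot
  obtain ⟨t, ht, hφ⟩ := exists_param γ hγ0 hA3 a (f i - f j) haD hD
  set b : R2 := a + t • (f i - f j) with hb
  -- Step 2: pointwise bound of the integrand.
  have hpt : ∀ z' : Z2,
      ENNReal.ofReal (if 0 < dotR (f i) (emb z') ∧ dotR (f j) (emb z') ≤ 0
          then |dotR (f i) (emb z')| * Real.exp (dotR a (emb z')) else 0)
        ≤ ENNReal.ofReal t⁻¹ * ENNReal.ofReal (Real.exp (dotR b (emb z'))) := by
    intro z'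
    by_cases hc : 0 < dotR (f i) (emb z') ∧ dotR (f j) (emb z') ≤ 0
    · rw [if_pos hc, ← ENNReal.ofReal_mul (by positivity)]
      apply ENNReal.ofReal_le_ofReal
      obtain ⟨hp, hq⟩ := hc
      set p := dotR (f i) (emb z') with hpdef
      set q := dotR (f j) (emb z') with hqdef
      have hbexp : dotR b (emb z') = dotR a (emb z') + (t * p + -(t * q)) := by
        rw [hb, dotR_add_left, dotR_smul_left, dotR_sub_left]
        ring
      have e1 : Real.exp (dotR b (emb z'))
          = Real.exp (dotR a (emb z')) * (Real.exp (t * p) * Real.exp (-(t * q))) := by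
        rw [hbexp, Real.exp_add, Real.exp_add]
      have h2 : (1:ℝ) ≤ Real.exp (-(t * q)) := Real.one_le_exp (by nlinarith)
      have h3 : p ≤ t⁻¹ * Real.exp (t * p) := by
        have hx := le_exp_self (t * p)
        have : t⁻¹ * (t * p) ≤ t⁻¹ * Real.exp (t * p) :=
          mul_le_mul_of_nonneg_left hx (by positivity)
        rwa [inv_mul_cancel_left₀ ht.ne'] at this
      rw [abs_of_pos hp]
      calc p * Real.exp (dotR a (emb z'))
          ≤ t⁻¹ * Real.exp (t * p) * Real.exp (dotR a (emb z')) :=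
            mul_le_mul_of_nonneg_right h3 (Real.exp_nonneg _)
        _ ≤ t⁻¹ * Real.exp (t * p) * Real.exp (dotR a (emb z')) * Real.exp (-(t * q)) := by
            apply le_mul_of_one_le_right (by positivity) h2
        _ = t⁻¹ * Real.exp (dotR b (emb z')) := by
            rw [e1]; ring
    · rw [if_neg hc]
      simp
  -- Step 3: sum the geometric bound.
  have hmain : exitLExp (twKer γ 0) (emb ⁻¹' K) z
        (fun z' => if 0 < dotR (f i) (emb z') ∧ dotR (f j) (emb z') ≤ 0
          then |dotR (f i) (emb z')| * Real.exp (dotR a (emb z')) else 0)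
      ≤ ENNReal.ofReal t⁻¹ * (ENNReal.ofReal (Real.exp (dotR b (emb z)))
          * ∑' n : ℕ, ENNReal.ofReal (jgf γ b) ^ n) := by
    calc exitLExp (twKer γ 0) (emb ⁻¹' K) z
          (fun z' => if 0 < dotR (f i) (emb z') ∧ dotR (f j) (emb z') ≤ 0
            then |dotR (f i) (emb z')| * Real.exp (dotR a (emb z')) else 0)
        = ∑' n : ℕ, ∑' z' : Z2, exitP (twKer γ 0) (emb ⁻¹' K) n z z'
            * ENNReal.ofReal (if 0 < dotR (f i) (emb z') ∧ dotR (f j) (emb z') ≤ 0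
                then |dotR (f i) (emb z')| * Real.exp (dotR a (emb z')) else 0) := rfl
      _ ≤ ∑' n : ℕ, ∑' z' : Z2, exitP (twKer γ 0) (emb ⁻¹' K) n z z'
            * (ENNReal.ofReal t⁻¹ * ENNReal.ofReal (Real.exp (dotR b (emb z')))) :=
          ENNReal.tsum_le_tsum fun n => ENNReal.tsum_le_tsum fun z' =>
            mul_le_mul_right (hpt z') _
      _ = ∑' n : ℕ, ENNReal.ofReal t⁻¹ * ∑' z' : Z2, exitP (twKer γ 0) (emb ⁻¹' K) n z z'
            * ENNReal.ofReal (Real.exp (dotR b (emb z'))) := by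
          refine tsum_congr fun n => ?_
          rw [← ENNReal.tsum_mul_left]
          exact tsum_congr fun z' => by ring
      _ ≤ ∑' n : ℕ, ENNReal.ofReal t⁻¹
            * (ENNReal.ofReal (jgf γ b) ^ n * ENNReal.ofReal (Real.exp (dotR b (emb z)))) :=
          ENNReal.tsum_le_tsum fun n =>
            mul_le_mul_right (exit_exp_bound γ hγ0 hA3 b (emb ⁻¹' K) n z) _
      _ = ENNReal.ofReal t⁻¹ * (ENNReal.ofReal (Real.exp (dotR b (emb z)))
            * ∑' n : ℕ, ENNReal.ofReal (jgf γ b) ^ n) := by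
          rw [ENNReal.tsum_mul_left]
          congr 1
          rw [ENNReal.tsum_mul_right]
          ring
  have hgeo : (∑' n : ℕ, ENNReal.ofReal (jgf γ b) ^ n)
      = (1 - ENNReal.ofReal (jgf γ b))⁻¹ := ENNReal.tsum_geometric _
  have hlt1 : ENNReal.ofReal (jgf γ b) < 1 := ENNReal.ofReal_lt_one.mpr hφ
  have hne0 : (1 : ℝ≥0∞) - ENNReal.ofReal (jgf γ b) ≠ 0 := by
    simp only [ne_eq, tsub_eq_zero_iff_le, not_le]
    exact hlt1
  have hfin : ENNReal.ofReal t⁻¹ * (ENNReal.ofReal (Real.exp (dotR b (emb z)))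
      * ∑' n : ℕ, ENNReal.ofReal (jgf γ b) ^ n) ≠ ⊤ := by
    rw [hgeo]
    exact ENNReal.mul_ne_top ENNReal.ofReal_ne_top
      (ENNReal.mul_ne_top ENNReal.ofReal_ne_top (ENNReal.inv_ne_top.mpr hne0))
  exact ne_top_of_le_ne_top hfin hmain
end KilledRW
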